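/- Every distance critical simple graph has minimum degree at least 2; that is, if G is distance critical then every vertex of G has degree at least 2. -/

import Mathlib

/-- A graph is *distance critical* if for every vertex `v` there is a pair of vertices of
`G − v` whose distance in `G − v` differs from their distance in `G`
(distances are `ℕ∞`-valued, `⊤` when there is no connecting path). -/
def IsDistanceCritical {V : Type*} (G : SimpleGraph V) : Prop :=
  ∀ v : V, ∃ x y : ({v}ᶜ : Set V),
    (G.induce ({v}ᶜ : Set V)).edist x y ≠ G.edist (x : V) (y : V)

open SimpleGraph

/-- An interior vertex of a path has two distinct neighbors. -/
lemma interior_two_neighbors {V : Type*} {G : SimpleGraph V} {x y v : V}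
    (p : G.Walk x y) (hp : p.IsPath) (hv : v ∈ p.support) (hvx : v ≠ x) (hvy : v ≠ y) :
    ∃ a b : V, a ≠ b ∧ G.Adj v a ∧ G.Adj v b := by
  induction p with
  | nil => simp at hv; exact absurd hv hvx
  | @cons u u' w h q ih =>
    rw [SimpleGraph.Walk.support_cons, List.mem_cons] at hv
    rcases hv with rfl | hv
    · exact absurd rfl hvx
    · rcases eq_or_ne v u' with rfl | hne
      · -- v = u', neighbors: u and q.getVert 1
        have hqnil : ¬ q.Nil := SimpleGraph.Walk.not_nil_of_ne hvy
        have hadj1 : G.Adj v (q.getVert 1) := SimpleGraph.Walk.adj_snd hqnil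
        have husupp : u ∉ q.support := by
          rw [SimpleGraph.Walk.cons_isPath_iff] at hp
          exact hp.2
        have hg1supp : q.getVert 1 ∈ q.support :=
          SimpleGraph.Walk.mem_support_iff_exists_getVert.mpr
            ⟨1, rfl, by rw [SimpleGraph.Walk.not_nil_iff_lt_length] at hqnil; omega⟩
        exact ⟨u, q.getVert 1, fun he => husupp (he ▸ hg1supp), h.symm, hadj1⟩
      · exact ih hp.of_cons hv hne hvy
  
/-- Transfer a walk avoiding the complement of `s` into the induced subgraph on `s`. -/
lemma walk_to_induce {V : Type*} {G : SimpleGraph V} {s : Set V} {x y : V}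
    (p : G.Walk x y) (h : ∀ w ∈ p.support, w ∈ s) :
    ∀ (hx : x ∈ s) (hy : y ∈ s),
      ∃ q : (G.induce s).Walk ⟨x, hx⟩ ⟨y, hy⟩, q.length = p.length := by
  induction p with
  | nil => intro hx hy; exact ⟨SimpleGraph.Walk.nil, rfl⟩
  | @cons u u' w hadj q ih =>
    intro hx hy
    have hu' : u' ∈ s := h u' (by simp)
    obtain ⟨q', hq'⟩ := ih (fun w hw => h w (by simp [hw])) hu' hy
    exact ⟨SimpleGraph.Walk.cons (by exact hadj) q', by exact congrArg (· + 1) hq'⟩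

theorem stmt_1 {V : Type*} [Fintype V] (G : SimpleGraph V) [DecidableRel G.Adj]
    (hG : IsDistanceCritical G) : ∀ v : V, 2 ≤ G.degree v := by
  classical
  intro v
  by_contra hdeg
  push_neg at hdeg
  obtain ⟨x, y, hxy⟩ := hG v
  apply hxy
  -- show the two distances are equal
  have hle1 : G.edist (x : V) (y : V) ≤ (G.induce ({v}ᶜ : Set V)).edist x y := by
    rcases eq_or_ne ((G.induce ({v}ᶜ : Set V)).edist x y) ⊤ with ht | ht
    · simp [ht]
    · obtain ⟨p, hp⟩ := SimpleGraph.exists_walk_of_edist_ne_top ht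
      rw [← hp]
      have : ((p.map (SimpleGraph.Embedding.induce _).toHom).length : ℕ∞) = p.length := by
        rw [SimpleGraph.Walk.length_map]
      rw [← this]
      exact SimpleGraph.edist_le _
  have hle2 : (G.induce ({v}ᶜ : Set V)).edist x y ≤ G.edist (x : V) (y : V) := by
    rcases eq_or_ne (G.edist (x : V) (y : V)) ⊤ with ht | ht
    · simp [ht]
    · obtain ⟨p, hp⟩ := SimpleGraph.exists_walk_of_edist_ne_top ht
      -- shorten to a path of length ≤
      have hbp : p.bypass.IsPath := p.bypass_isPath
      have hlen : p.bypass.length ≤ p.length := p.length_bypass_le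
      -- v is not in the support of the path
      have hvx : v ≠ (x : V) := fun he => x.2 (by simp [← he])
      have hvy : v ≠ (y : V) := fun he => y.2 (by simp [← he])
      have hvsupp : v ∉ p.bypass.support := by
        intro hv
        obtain ⟨a, b, hab, ha, hb⟩ := interior_two_neighbors p.bypass hbp hv hvx hvy
        have hsub : ({a, b} : Finset V) ⊆ G.neighborFinset v := by
          intro z hz
          simp only [Finset.mem_insert, Finset.mem_singleton] at hz
          rcases hz with rfl | rfl <;> simp [ha, hb]
        have := Finset.card_le_card hsub
        rw [Finset.card_pair hab] at this
        exact absurd (this.trans_lt (by rwa [SimpleGraph.degree] at hdeg)) (lt_irrefl _)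
      have hall : ∀ w ∈ p.bypass.support, w ∈ ({v}ᶜ : Set V) := by
        intro w hw
        simp only [Set.mem_compl_iff, Set.mem_singleton_iff]
        rintro rfl; exact hvsupp hw
      obtain ⟨q, hq⟩ := walk_to_induce p.bypass hall x.2 y.2
      calc (G.induce ({v}ᶜ : Set V)).edist x y ≤ q.length := by
            have := SimpleGraph.edist_le q
            convert this using 2
        _ ≤ p.length := by exact_mod_cast hq ▸ Nat.cast_le.mpr hlen
        _ = G.edist (x : V) (y : V) := hp
  exact le_antisymm hle2 hle1
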